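/- Let M ⊂ ℝⁿ be measurable with 0 < μ(M) < ∞, let 0 < p < q < ∞, 0 < b ≤ c ≤ ∞, and A, B pairs of reals. Then every f ∈ L_{q,c;B}(M) belongs to L_{p,b;A}(M) and ‖f‖_{p,b;A} ≤ C μ(M)^{1/p - 1/q} ℓ^{A-B}(μ(M)) ‖f‖_{q,c;B}, with C independent of f and M. -/

import Mathlib

open MeasureTheory ENNReal Set
open scoped FourierTransform

/-- Broken logarithm `ℓ^A(t)`. -/
noncomputable def brokenLog (A : ℝ × ℝ) (t : ℝ) : ℝ :=
  if t ≤ 1 then (1 + |Real.log t|) ^ A.1 else (1 + |Real.log t|) ^ A.2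

lemma one_add_abs_log_pos (t : ℝ) : (0:ℝ) < 1 + |Real.log t| := by positivity

lemma measurable_rpow_const (a : ℝ) : Measurable (fun x : ℝ => x ^ a) := by
  apply measurable_of_continuousOn_compl_singleton (0:ℝ)
  exact continuousOn_of_forall_continuousAt fun x hx =>
    Real.continuousAt_rpow_const x a (Or.inl hx)

lemma brokenLog_pos (A : ℝ × ℝ) (t : ℝ) : 0 < brokenLog A t := by
  unfold brokenLog; split <;> exact Real.rpow_pos_of_pos (one_add_abs_log_pos t) _

lemma measurable_brokenLog (A : ℝ × ℝ) : Measurable (brokenLog A) := by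
  unfold brokenLog
  have h0 : Measurable fun t : ℝ => (1 + |Real.log t|) :=
    measurable_const.add Real.measurable_log.abs
  exact Measurable.ite (measurableSet_le measurable_id measurable_const)
    ((measurable_rpow_const A.1).comp h0) ((measurable_rpow_const A.2).comp h0)

lemma brokenLog_mul (A B : ℝ × ℝ) (t : ℝ) :
    brokenLog (A.1 - B.1, A.2 - B.2) t * brokenLog B t = brokenLog A t := by
  unfold brokenLog
  split <;> rw [← Real.rpow_add (one_add_abs_log_pos t)] <;> ring_nf

lemma one_add_log_le {ε : ℝ} (hε : 0 < ε) {u : ℝ} (hu : 1 ≤ u) :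
    1 + Real.log u ≤ (1 + ε⁻¹) * u ^ ε := by
  have hu0 : 0 < u := lt_of_lt_of_le one_pos hu
  have h1 : (1:ℝ) ≤ u ^ ε := Real.one_le_rpow hu hε.le
  have h2 : Real.log u ≤ ε⁻¹ * u ^ ε := by
    have h3 := Real.log_le_sub_one_of_pos (Real.rpow_pos_of_pos hu0 ε)
    rw [Real.log_rpow hu0 ε] at h3
    have h4 : Real.log u ≤ (u ^ ε - 1) / ε := by
      rw [le_div_iff₀ hε]; linarith
    refine h4.trans ?_
    rw [div_eq_inv_mul]
    exact mul_le_mul_of_nonneg_left (by linarith) (by positivity)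
  calc 1 + Real.log u ≤ u ^ ε + ε⁻¹ * u ^ ε := by linarith
    _ = (1 + ε⁻¹) * u ^ ε := by ring

/-- For `s ≥ 1`, `(1 + log s) ^ β ≤ K s ^ δ`. -/
lemma ray_bound {δ : ℝ} (hδ : 0 < δ) (β : ℝ) :
    ∃ K : ℝ, 0 < K ∧ ∀ s : ℝ, 1 ≤ s → (1 + Real.log s) ^ β ≤ K * s ^ δ := by
  rcases le_or_gt β 0 with hβ | hβ
  · refine ⟨1, one_pos, fun s hs => ?_⟩
    have hlog : (1:ℝ) ≤ 1 + Real.log s := by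
      have := Real.log_nonneg hs; linarith
    have h1 : (1 + Real.log s) ^ β ≤ 1 :=
      Real.rpow_le_one_of_one_le_of_nonpos hlog hβ
    have h2 : (1:ℝ) ≤ s ^ δ := Real.one_le_rpow hs hδ.le
    nlinarith
  · refine ⟨(1 + (δ/β)⁻¹) ^ β, Real.rpow_pos_of_pos (by positivity) _, fun s hs => ?_⟩
    have hs0 : (0:ℝ) < s := lt_of_lt_of_le one_pos hs
    have h1 : 1 + Real.log s ≤ (1 + (δ/β)⁻¹) * s ^ (δ/β) :=
      one_add_log_le (by positivity) hs
    have hlognn : (0:ℝ) ≤ 1 + Real.log s := by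
      have := Real.log_nonneg hs; linarith
    calc (1 + Real.log s) ^ β ≤ ((1 + (δ/β)⁻¹) * s ^ (δ/β)) ^ β :=
          Real.rpow_le_rpow hlognn h1 hβ.le
      _ = (1 + (δ/β)⁻¹) ^ β * (s ^ (δ/β)) ^ β := Real.mul_rpow (by positivity) (by positivity)
      _ = (1 + (δ/β)⁻¹) ^ β * s ^ δ := by
          rw [← Real.rpow_mul hs0.le, div_mul_cancel₀ _ hβ.ne']

/-- `u^δ (1+|log u|)^γ` is bounded on `(0,1]`. -/
lemma small_bound {δ : ℝ} (hδ : 0 < δ) (γ : ℝ) :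
    ∃ K : ℝ, 0 < K ∧ ∀ u : ℝ, 0 < u → u ≤ 1 → u ^ δ * (1 + |Real.log u|) ^ γ ≤ K := by
  obtain ⟨K, hK, hKb⟩ := ray_bound hδ γ
  refine ⟨K, hK, fun u hu hu1 => ?_⟩
  have hs : (1:ℝ) ≤ u⁻¹ := (one_le_inv₀ hu).mpr hu1
  have habs : |Real.log u| = Real.log u⁻¹ := by
    rw [Real.log_inv]
    exact abs_of_nonpos (Real.log_nonpos hu.le hu1)
  have h1 : (1 + |Real.log u|) ^ γ ≤ K * (u⁻¹) ^ δ := by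
    rw [habs]; exact hKb _ hs
  have h2 : (u⁻¹) ^ δ = (u ^ δ)⁻¹ := Real.inv_rpow hu.le δ
  have h3 : (0:ℝ) < u ^ δ := Real.rpow_pos_of_pos hu δ
  calc u ^ δ * (1 + |Real.log u|) ^ γ ≤ u ^ δ * (K * (u ^ δ)⁻¹) := by
        rw [← h2]; exact mul_le_mul_of_nonneg_left h1 h3.le
    _ = K := by field_simp

/-- `m^δ (1+|log m|)^γ` is bounded below on `[1,∞)`. -/
lemma lower_bound {δ : ℝ} (hδ : 0 < δ) (γ : ℝ) :
    ∃ k : ℝ, 0 < k ∧ ∀ m : ℝ, 1 ≤ m → k ≤ m ^ δ * (1 + |Real.log m|) ^ γ := by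
  obtain ⟨K, hK, hKb⟩ := ray_bound hδ (-γ)
  refine ⟨K⁻¹, by positivity, fun m hm => ?_⟩
  have hl : (0:ℝ) < 1 + Real.log m := by have := Real.log_nonneg hm; linarith
  have habs : |Real.log m| = Real.log m := abs_of_nonneg (Real.log_nonneg hm)
  have h1 : ((1 + Real.log m) ^ γ)⁻¹ ≤ K * m ^ δ := by
    rw [← Real.rpow_neg hl.le]; exact hKb _ hm
  have hX : (0:ℝ) < (1 + Real.log m) ^ γ := Real.rpow_pos_of_pos hl γ
  rw [habs]
  rw [inv_le_iff_one_le_mul₀ hK]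
  have hXX : ((1 + Real.log m) ^ γ)⁻¹ * (1 + Real.log m) ^ γ = 1 := inv_mul_cancel₀ hX.ne'
  nlinarith [mul_le_mul_of_nonneg_right h1 hX.le]

lemma L_submult {x y : ℝ} (hx : 0 < x) (hy : 0 < y) :
    1 + |Real.log (x * y)| ≤ (1 + |Real.log x|) * (1 + |Real.log y|) := by
  rw [Real.log_mul hx.ne' hy.ne']
  have h := abs_add_le (Real.log x) (Real.log y)
  nlinarith [abs_nonneg (Real.log x), abs_nonneg (Real.log y)]

lemma L_rpow_le (β : ℝ) {x y : ℝ} (hx : 0 < x) (hy : 0 < y) :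
    (1 + |Real.log x|) ^ β ≤
      (1 + |Real.log y|) ^ β * (1 + |Real.log (x / y)|) ^ |β| := by
  have hLx := one_add_abs_log_pos x
  have hLy := one_add_abs_log_pos y
  have hLu := one_add_abs_log_pos (x / y)
  rcases le_or_gt 0 β with hβ | hβ
  · rw [abs_of_nonneg hβ]
    have h1 : 1 + |Real.log x| ≤ (1 + |Real.log y|) * (1 + |Real.log (x / y)|) := by
      have := L_submult hy (div_pos hx hy)
      rwa [mul_div_cancel₀ _ hy.ne'] at this
    calc (1 + |Real.log x|) ^ β ≤ ((1 + |Real.log y|) * (1 + |Real.log (x / y)|)) ^ β :=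
          Real.rpow_le_rpow hLx.le h1 hβ
      _ = _ := Real.mul_rpow hLy.le hLu.le
  · rw [abs_of_neg hβ]
    have h1 : 1 + |Real.log y| ≤ (1 + |Real.log x|) * (1 + |Real.log (x / y)|) := by
      have h2 := L_submult hx (div_pos hy hx)
      rw [mul_div_cancel₀ _ hx.ne'] at h2
      have h3 : |Real.log (y / x)| = |Real.log (x / y)| := by
        rw [show y / x = (x / y)⁻¹ by rw [inv_div], Real.log_inv, abs_neg]
      rwa [h3] at h2
    have h4 : (1 + |Real.log y|) / (1 + |Real.log (x / y)|) ≤ 1 + |Real.log x| := by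
      rw [div_le_iff₀ hLu]; linarith [h1]
    have h5 : (0:ℝ) < (1 + |Real.log y|) / (1 + |Real.log (x / y)|) := by positivity
    calc (1 + |Real.log x|) ^ β
        ≤ ((1 + |Real.log y|) / (1 + |Real.log (x / y)|)) ^ β :=
          Real.rpow_le_rpow_of_nonpos h5 h4 hβ.le
      _ = (1 + |Real.log y|) ^ β * (1 + |Real.log (x / y)|) ^ (-β) := by
          rw [Real.div_rpow hLy.le hLu.le, Real.rpow_neg hLu.le, div_eq_mul_inv]

lemma samebranch_bound {δ : ℝ} (hδ : 0 < δ) (β : ℝ) :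
    ∃ K : ℝ, 0 < K ∧ ∀ m t : ℝ, 0 < t → t ≤ m →
      t ^ δ * (1 + |Real.log t|) ^ β ≤ K * (m ^ δ * (1 + |Real.log m|) ^ β) := by
  obtain ⟨K, hK, hKb⟩ := small_bound hδ |β|
  refine ⟨K, hK, fun m t ht htm => ?_⟩
  have hm : 0 < m := lt_of_lt_of_le ht htm
  set u := t / m with hu_def
  have hu : 0 < u := div_pos ht hm
  have hu1 : u ≤ 1 := div_le_one_of_le₀ htm hm.le
  have htδ : t ^ δ = m ^ δ * u ^ δ := by
    rw [hu_def, Real.div_rpow ht.le hm.le]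
    field_simp
  have hLm := one_add_abs_log_pos m
  have htδpos : (0:ℝ) < t ^ δ := Real.rpow_pos_of_pos ht δ
  calc t ^ δ * (1 + |Real.log t|) ^ β
      ≤ t ^ δ * ((1 + |Real.log m|) ^ β * (1 + |Real.log u|) ^ |β|) :=
        mul_le_mul_of_nonneg_left (L_rpow_le β ht hm) htδpos.le
    _ = (m ^ δ * (1 + |Real.log m|) ^ β) * (u ^ δ * (1 + |Real.log u|) ^ |β|) := by
        rw [htδ]; ring
    _ ≤ (m ^ δ * (1 + |Real.log m|) ^ β) * K := by
        refine mul_le_mul_of_nonneg_left (hKb u hu hu1) ?_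
        positivity
    _ = K * (m ^ δ * (1 + |Real.log m|) ^ β) := mul_comm _ _

lemma sup_bound {δ : ℝ} (hδ : 0 < δ) (A : ℝ × ℝ) :
    ∃ C : ℝ, 0 < C ∧ ∀ m t : ℝ, 0 < t → t ≤ m →
      t ^ δ * brokenLog A t ≤ C * (m ^ δ * brokenLog A m) := by
  obtain ⟨K₁, hK₁, hK₁b⟩ := samebranch_bound hδ A.1
  obtain ⟨K₂, hK₂, hK₂b⟩ := samebranch_bound hδ A.2
  obtain ⟨K₃, hK₃, hK₃b⟩ := small_bound hδ A.1
  obtain ⟨k, hk, hkb⟩ := lower_bound hδ A.2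
  refine ⟨max (max K₁ K₂) (K₃ / k), by positivity, fun m t ht htm => ?_⟩
  have hm : 0 < m := lt_of_lt_of_le ht htm
  have hCpos : (0:ℝ) < max (max K₁ K₂) (K₃ / k) := by positivity
  by_cases hm1 : m ≤ 1
  · have ht1 : t ≤ 1 := htm.trans hm1
    rw [brokenLog, if_pos ht1, brokenLog, if_pos hm1]
    refine (hK₁b m t ht htm).trans ?_
    have : (0:ℝ) ≤ m ^ δ * (1 + |Real.log m|) ^ A.1 := by positivity
    exact mul_le_mul_of_nonneg_right (le_trans (le_max_left _ _) (le_max_left _ _)) this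
  · by_cases ht1 : t ≤ 1
    · rw [brokenLog, if_pos ht1, brokenLog, if_neg hm1]
      have hRHS : k ≤ m ^ δ * (1 + |Real.log m|) ^ A.2 := hkb m (le_of_not_ge hm1)
      have hLHS : t ^ δ * (1 + |Real.log t|) ^ A.1 ≤ K₃ := hK₃b t ht ht1
      calc t ^ δ * (1 + |Real.log t|) ^ A.1 ≤ K₃ := hLHS
        _ = (K₃ / k) * k := by field_simp
        _ ≤ (K₃ / k) * (m ^ δ * (1 + |Real.log m|) ^ A.2) :=
            mul_le_mul_of_nonneg_left hRHS (by positivity)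
        _ ≤ max (max K₁ K₂) (K₃ / k) * (m ^ δ * (1 + |Real.log m|) ^ A.2) := by
            refine mul_le_mul_of_nonneg_right (le_max_right _ _) ?_
            positivity
    · rw [brokenLog, if_neg ht1, brokenLog, if_neg hm1]
      refine (hK₂b m t ht htm).trans ?_
      have : (0:ℝ) ≤ m ^ δ * (1 + |Real.log m|) ^ A.2 := by positivity
      exact mul_le_mul_of_nonneg_right (le_trans (le_max_right _ _) (le_max_left _ _)) this

/-- Non-increasing rearrangement of `f` with respect to `μ`. -/
noncomputable def rearr {α : Type*} [MeasurableSpace α] (μ : Measure α) (f : α → ℂ) (t : ℝ) : ℝ :=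
  sInf {s : ℝ | 0 ≤ s ∧ μ {x | s < ‖f x‖} ≤ ENNReal.ofReal t}

lemma rearr_nonneg {α : Type*} [MeasurableSpace α] (μ : Measure α) (f : α → ℂ) (t : ℝ) :
    0 ≤ rearr μ f t :=
  Real.sInf_nonneg fun _ hs => hs.1

lemma measurable_rearr {α : Type*} [MeasurableSpace α] (μ : Measure α) (f : α → ℂ) :
    Measurable (rearr μ f) := by
  set E : ℝ → Set ℝ := fun t => {s : ℝ | 0 ≤ s ∧ μ {x | s < ‖f x‖} ≤ ENNReal.ofReal t} with hE
  have hEmono : ∀ {t t' : ℝ}, t ≤ t' → E t ⊆ E t' := by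
    intro t t' htt' s hs
    exact ⟨hs.1, hs.2.trans (ENNReal.ofReal_le_ofReal htt')⟩
  have hEbdd : ∀ t, BddBelow (E t) := fun t => ⟨0, fun s hs => hs.1⟩
  have hmono : ∀ {t t' : ℝ}, t ≤ t' → (E t).Nonempty → rearr μ f t' ≤ rearr μ f t :=
    fun htt' hne => csInf_le_csInf (hEbdd _) hne (hEmono htt')
  apply measurable_of_Ioi
  intro a
  rcases lt_or_ge a 0 with ha | ha
  · have : rearr μ f ⁻¹' Ioi a = univ := by
      ext t; simp only [mem_preimage, mem_Ioi, mem_univ, iff_true]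
      exact lt_of_lt_of_le ha (rearr_nonneg μ f t)
    rw [this]; exact MeasurableSet.univ
  · have hset : rearr μ f ⁻¹' Ioi a =
        ({t | ¬(E t).Nonempty} ∪ {t | (E t).Nonempty ∧ rearr μ f t ≤ a})ᶜ := by
      ext t
      simp only [mem_preimage, mem_Ioi, mem_compl_iff, mem_union, mem_setOf_eq]
      constructor
      · intro h
        push_neg
        refine ⟨?_, fun _ => h⟩
        by_contra hne
        push_neg at hne
        have : rearr μ f t = 0 := by
          have hEt : {s : ℝ | 0 ≤ s ∧ μ {x | s < ‖f x‖} ≤ ENNReal.ofReal t} = (∅ : Set ℝ) := hne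
          rw [rearr, hEt, Real.sInf_empty]
        rw [this] at h; exact absurd h (not_lt.mpr ha)
      · intro h
        push_neg at h
        exact h.2 h.1
    rw [hset]
    refine (MeasurableSet.union ?_ ?_).compl
    · refine (IsLowerSet.ordConnected ?_).measurableSet
      intro t' t htt' hne hne'
      exact hne (Set.Nonempty.mono (hEmono htt') hne')
    · refine (IsUpperSet.ordConnected ?_).measurableSet
      intro t t' htt' ht
      exact ⟨Set.Nonempty.mono (hEmono htt') ht.1, (hmono htt' ht.1).trans ht.2⟩

lemma brokenLog_rpow (A : ℝ × ℝ) (t : ℝ) (s : ℝ) :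
    brokenLog A t ^ s = brokenLog (A.1 * s, A.2 * s) t := by
  unfold brokenLog
  split <;> rw [← Real.rpow_mul (one_add_abs_log_pos t).le]

lemma weight_bound (r : ℝ≥0∞) (hr : r ≠ 0) {δ : ℝ} (hδ : 0 < δ) (A : ℝ × ℝ) :
    ∃ C : ℝ, 0 < C ∧ ∀ m : ℝ, 0 < m →
      eLpNorm (fun t : ℝ => t ^ (δ - r.toReal⁻¹) * brokenLog A t) r
          (volume.restrict (Ioo 0 m)) ≤ ENNReal.ofReal (C * (m ^ δ * brokenLog A m)) := by
  by_cases hrtop : r = ⊤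
  · subst hrtop
    obtain ⟨C, hC, hCb⟩ := sup_bound hδ A
    refine ⟨C, hC, fun m hm => ?_⟩
    rw [eLpNorm_exponent_top]
    apply eLpNormEssSup_le_of_ae_bound (C := C * (m ^ δ * brokenLog A m))
    rw [ae_restrict_iff' measurableSet_Ioo]
    filter_upwards with t ht
    have h1 : (0:ℝ) < t ^ (δ - (⊤ : ℝ≥0∞).toReal⁻¹) * brokenLog A t := by
      have := brokenLog_pos A t
      have := Real.rpow_pos_of_pos ht.1 (δ - (⊤ : ℝ≥0∞).toReal⁻¹)
      positivity
    rw [Real.norm_eq_abs, abs_of_pos h1]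
    have h2 : (⊤ : ℝ≥0∞).toReal⁻¹ = 0 := by simp
    rw [h2, sub_zero]
    exact hCb m t ht.1 ht.2.le
  · set r' := r.toReal with hr'def
    have hr' : 0 < r' := ENNReal.toReal_pos hr hrtop
    set e := δ * r' / 2 with he_def
    have he : 0 < e := by positivity
    obtain ⟨C₁, hC₁, hC₁b⟩ := sup_bound he (A.1 * r', A.2 * r')
    refine ⟨(C₁ / e) ^ (1/r'), Real.rpow_pos_of_pos (by positivity) _, fun m hm => ?_⟩
    set D := C₁ * (m ^ e * brokenLog (A.1 * r', A.2 * r') m) with hD_def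
    have hDpos : 0 < D := by
      have := brokenLog_pos (A.1 * r', A.2 * r') m
      have := Real.rpow_pos_of_pos hm e
      positivity
    have key : ∀ t ∈ Ioo (0:ℝ) m,
        ((‖t ^ (δ - r.toReal⁻¹) * brokenLog A t‖₊ : ℝ≥0∞)) ^ r' ≤
          ENNReal.ofReal (t ^ (e - 1)) * ENNReal.ofReal D := by
      intro t ht
      have ht0 : 0 < t := ht.1
      have hw : (0:ℝ) ≤ t ^ (δ - r.toReal⁻¹) * brokenLog A t := by
        have := brokenLog_pos A t
        have := Real.rpow_pos_of_pos ht0 (δ - r.toReal⁻¹)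
        positivity
      rw [← enorm_eq_nnnorm, ← ofReal_norm, Real.norm_eq_abs, abs_of_nonneg hw,
        ENNReal.ofReal_rpow_of_nonneg hw hr'.le, ← ENNReal.ofReal_mul
          (Real.rpow_nonneg ht0.le _)]
      apply ENNReal.ofReal_le_ofReal
      have hexp : (t ^ (δ - r.toReal⁻¹) * brokenLog A t) ^ r' =
          t ^ (δ * r' - 1) * brokenLog (A.1 * r', A.2 * r') t := by
        have hrr : r.toReal⁻¹ = r'⁻¹ := rfl
        rw [Real.mul_rpow (Real.rpow_nonneg ht0.le _) (brokenLog_pos A t).le,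
          ← Real.rpow_mul ht0.le, brokenLog_rpow, hrr,
          show (δ - r'⁻¹) * r' = δ * r' - 1 by field_simp]
      rw [hexp]
      have hsplit : t ^ (δ * r' - 1) = t ^ (e - 1) * t ^ e := by
        rw [← Real.rpow_add ht0]
        congr 1
        rw [he_def]; ring
      rw [hsplit, mul_assoc]
      refine mul_le_mul_of_nonneg_left ?_ (Real.rpow_nonneg ht0.le _)
      exact hC₁b m t ht0 ht.2.le
    rw [eLpNorm_eq_lintegral_rpow_enorm_toReal hr hrtop]
    have hIle : (∫⁻ t in Ioo (0:ℝ) m,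
        ((‖t ^ (δ - r.toReal⁻¹) * brokenLog A t‖₊ : ℝ≥0∞)) ^ r') ≤
        (∫⁻ t in Ioo (0:ℝ) m, ENNReal.ofReal (t ^ (e - 1))) * ENNReal.ofReal D := by
      rw [← lintegral_mul_const _ ((measurable_rpow_const (e-1)).ennreal_ofReal)]
      refine lintegral_mono_ae ?_
      rw [ae_restrict_iff' measurableSet_Ioo]
      exact ae_of_all _ key
    have hJ : (∫⁻ t in Ioo (0:ℝ) m, ENNReal.ofReal (t ^ (e - 1))) =
        ENNReal.ofReal (m ^ e / e) := by
      rw [← MeasureTheory.ofReal_integral_eq_lintegral_ofReal]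
      · congr 1
        rw [← integral_Ioc_eq_integral_Ioo, ← intervalIntegral.integral_of_le hm.le,
          integral_rpow (Or.inl (by linarith : (-1:ℝ) < e - 1))]
        rw [sub_add_cancel, Real.zero_rpow he.ne']
        ring
      · exact (_root_.intervalIntegral.integrableOn_Ioo_rpow_iff hm).mpr
          (by linarith : (-1:ℝ) < e - 1)
      · filter_upwards [ae_restrict_mem measurableSet_Ioo] with t ht
        exact Real.rpow_nonneg ht.1.le _
    calc (∫⁻ t in Ioo (0:ℝ) m,
          ((‖t ^ (δ - r.toReal⁻¹) * brokenLog A t‖₊ : ℝ≥0∞)) ^ r') ^ (1 / r')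
        ≤ (ENNReal.ofReal (m ^ e / e) * ENNReal.ofReal D) ^ (1 / r') := by
          refine ENNReal.rpow_le_rpow ?_ (by positivity)
          rw [← hJ]; exact hIle
      _ = ENNReal.ofReal ((m ^ e / e * D) ^ (1 / r')) := by
          rw [← ENNReal.ofReal_mul (by positivity),
            ENNReal.ofReal_rpow_of_nonneg (by positivity) (by positivity)]
      _ = ENNReal.ofReal ((C₁ / e) ^ (1/r') * (m ^ δ * brokenLog A m)) := by
          congr 1
          have hmm : m ^ e / e * D = C₁ / e * (m ^ (δ * r') * brokenLog (A.1 * r', A.2 * r') m) := by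
            rw [hD_def]
            have : m ^ e * m ^ e = m ^ (δ * r') := by
              rw [← Real.rpow_add hm]
              congr 1
              rw [he_def]; ring
            rw [← this]
            ring
          rw [hmm, Real.mul_rpow (by positivity)
              (mul_nonneg (Real.rpow_nonneg hm.le _) (brokenLog_pos _ _).le),
            Real.mul_rpow (Real.rpow_nonneg hm.le _) (brokenLog_pos _ _).le,
            ← Real.rpow_mul hm.le, brokenLog_rpow]
          have h1 : δ * r' * (1 / r') = δ := by field_simp
          have h2 : A.1 * r' * (1 / r') = A.1 := by field_simp
          have h3 : A.2 * r' * (1 / r') = A.2 := by field_simp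
          rw [h1, h2, h3]

/-- Lorentz–Zygmund quasi-norm `‖f‖_{p,b;A}` over `(0, len)`, computed from a
rearrangement `g = f*`.  The case `b = ∞` is the usual essential-supremum modification. -/
noncomputable def lzNorm (p b : ℝ≥0∞) (A : ℝ × ℝ) (len : ℝ≥0∞) (g : ℝ → ℝ) : ℝ≥0∞ :=
  eLpNorm (fun t : ℝ => t ^ (p.toReal⁻¹ - b.toReal⁻¹) * brokenLog A t * g t) b
    (volume.restrict {t : ℝ | 0 < t ∧ ENNReal.ofReal t < len})

/-- Lemma 2, case `b ≤ c`: embedding `L_{q,c;B}(M) ⊂ L_{p,b;A}(M)` with norm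
`≲ μ(M)^{1/p-1/q} ℓ^{A-B}(μ(M))`, constant independent of `f` and `M`. -/
theorem stmt_3 (n : ℕ) (p q : ℝ) (hp : 0 < p) (hpq : p < q)
    (b c : ℝ≥0∞) (hb : 0 < b) (hbc : b ≤ c) (A B : ℝ × ℝ) :
    ∃ C : ℝ, 0 < C ∧ ∀ (M : Set (Fin n → ℝ)), MeasurableSet M →
      0 < volume M → volume M < ⊤ → ∀ f : (Fin n → ℝ) → ℂ,
      lzNorm (ENNReal.ofReal q) c B (volume M) (rearr (volume.restrict M) f) < ⊤ →
      lzNorm (ENNReal.ofReal p) b A (volume M) (rearr (volume.restrict M) f) < ⊤ ∧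
      lzNorm (ENNReal.ofReal p) b A (volume M) (rearr (volume.restrict M) f) ≤
        ENNReal.ofReal (C * (volume M).toReal ^ (p⁻¹ - q⁻¹) *
            brokenLog (A.1 - B.1, A.2 - B.2) (volume M).toReal) *
          lzNorm (ENNReal.ofReal q) c B (volume M) (rearr (volume.restrict M) f) := by
  have hq : 0 < q := hp.trans hpq
  have hδ : 0 < p⁻¹ - q⁻¹ := by
    have h1 : q⁻¹ < p⁻¹ := by
      rw [inv_lt_inv₀ hq hp]; exact hpq
    linarith
  set r : ℝ≥0∞ := (b⁻¹ - c⁻¹)⁻¹ with hr_def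
  have hbinvtop : b⁻¹ ≠ ⊤ := ENNReal.inv_ne_top.mpr hb.ne'
  have hr0 : r ≠ 0 := by
    rw [hr_def]
    exact ENNReal.inv_ne_zero.mpr ((tsub_le_self.trans_lt hbinvtop.lt_top).ne)
  have hcb : c⁻¹ ≤ b⁻¹ := ENNReal.inv_le_inv' hbc
  have hpqr : 1 / b = 1 / r + 1 / c := by
    simp only [one_div, hr_def, inv_inv]
    exact (tsub_add_cancel_of_le hcb).symm
  have hrtoReal : r.toReal⁻¹ = b.toReal⁻¹ - c.toReal⁻¹ := by
    rw [hr_def, ENNReal.toReal_inv, inv_inv, ENNReal.toReal_sub_of_le hcb hbinvtop,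
      ENNReal.toReal_inv, ENNReal.toReal_inv]
  obtain ⟨C, hC, hCb⟩ := weight_bound r hr0 hδ (A.1 - B.1, A.2 - B.2)
  refine ⟨C, hC, fun M hM hM0 hMtop f hfin => ?_⟩
  set m := (volume M).toReal with hm_def
  have hm : 0 < m := ENNReal.toReal_pos hM0.ne' hMtop.ne
  have hSet : {t : ℝ | 0 < t ∧ ENNReal.ofReal t < volume M} = Ioo 0 m := by
    ext t
    simp only [mem_setOf_eq, mem_Ioo]
    constructor
    · rintro ⟨h1, h2⟩
      refine ⟨h1, ?_⟩
      rw [← ENNReal.ofReal_toReal hMtop.ne, ENNReal.ofReal_lt_ofReal_iff_of_nonneg h1.le] at h2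
      exact h2
    · rintro ⟨h1, h2⟩
      refine ⟨h1, ?_⟩
      rw [← ENNReal.ofReal_toReal hMtop.ne, ENNReal.ofReal_lt_ofReal_iff_of_nonneg h1.le]
      exact h2
  set g := rearr (volume.restrict M) f with hg_def
  have hg : Measurable g := measurable_rearr _ _
  set D : ℝ × ℝ := (A.1 - B.1, A.2 - B.2) with hD_def
  set w : ℝ → ℝ := fun t => t ^ ((p⁻¹ - q⁻¹) - r.toReal⁻¹) * brokenLog D t with hw_def
  set Fq : ℝ → ℝ := fun t => t ^ (q⁻¹ - c.toReal⁻¹) * brokenLog B t * g t with hFq_def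
  set Fp : ℝ → ℝ := fun t => t ^ (p⁻¹ - b.toReal⁻¹) * brokenLog A t * g t with hFp_def
  set ν := volume.restrict (Ioo (0:ℝ) m) with hν_def
  have hNq : lzNorm (ENNReal.ofReal q) c B (volume M) g = eLpNorm Fq c ν := by
    rw [lzNorm, hSet, ENNReal.toReal_ofReal hq.le]
  have hNp : lzNorm (ENNReal.ofReal p) b A (volume M) g = eLpNorm Fp b ν := by
    rw [lzNorm, hSet, ENNReal.toReal_ofReal hp.le]
  have hae : Fp =ᵐ[ν] (w • Fq) := by
    filter_upwards [ae_restrict_mem measurableSet_Ioo] with t ht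
    have hxy : ((p⁻¹ - q⁻¹) - r.toReal⁻¹) + (q⁻¹ - c.toReal⁻¹) = p⁻¹ - b.toReal⁻¹ := by
      rw [hrtoReal]; ring
    have : Fp t = w t * Fq t := by
      rw [hFp_def, hw_def, hFq_def]
      simp only
      rw [← brokenLog_mul A B t, ← hD_def, ← hxy, Real.rpow_add ht.1]
      ring
    rw [this]
    rfl
  have hFq_meas : AEStronglyMeasurable Fq ν :=
    (((measurable_rpow_const _).mul (measurable_brokenLog B)).mul hg).aestronglyMeasurable
  have hw_meas : AEStronglyMeasurable w ν :=
    ((measurable_rpow_const _).mul (measurable_brokenLog D)).aestronglyMeasurable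
  have hmain : lzNorm (ENNReal.ofReal p) b A (volume M) g ≤
      ENNReal.ofReal (C * m ^ (p⁻¹ - q⁻¹) * brokenLog D m) *
        lzNorm (ENNReal.ofReal q) c B (volume M) g := by
    rw [hNp, hNq]
    calc eLpNorm Fp b ν = eLpNorm (w • Fq) b ν := eLpNorm_congr_ae hae
      _ ≤ eLpNorm w r ν * eLpNorm Fq c ν :=
          eLpNorm_smul_le_mul_eLpNorm hFq_meas hw_meas
            (hpqr := ⟨by simpa only [one_div] using hpqr.symm⟩)
      _ ≤ ENNReal.ofReal (C * (m ^ (p⁻¹ - q⁻¹) * brokenLog D m)) * eLpNorm Fq c ν :=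
          mul_le_mul_left (hCb m hm) _
      _ = ENNReal.ofReal (C * m ^ (p⁻¹ - q⁻¹) * brokenLog D m) * eLpNorm Fq c ν := by
          rw [mul_assoc]
  refine ⟨?_, hmain⟩
  exact lt_of_le_of_lt hmain (ENNReal.mul_lt_top ENNReal.ofReal_lt_top hfin)
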